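/- Let μ, β, λ₀ > 0 and α ∈ (0,1). Define D(t) = λ₀ + μ(1 − e^{−βt}) + μ(1 − e^{−βt})e^{−βt} / (exp(−α(1 − e^{−βt})) − e^{−βt}) for t > 0. Then D(t) → λ₀ + μ as t → ∞ and D(t) → λ₀ + μ/(1−α) as t → 0⁺. -/

import Mathlib

open Real Filter

theorem hazard_rate_limits
    (μ β l₀ : ℝ) (α : ℝ)
    (hμ : 0 < μ) (hβ : 0 < β) (hl : 0 < l₀) (hα : α ∈ Set.Ioo (0:ℝ) 1) :
    let D : ℝ → ℝ := fun t =>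
      l₀ + μ * (1 - Real.exp (-β * t))
        + μ * (1 - Real.exp (-β * t)) * Real.exp (-β * t)
            / (Real.exp (-α * (1 - Real.exp (-β * t))) - Real.exp (-β * t))
    Tendsto D atTop (nhds (l₀ + μ)) ∧
      Tendsto D (nhdsWithin 0 (Set.Ioi 0)) (nhds (l₀ + μ / (1 - α))) := by
  intro D
  obtain ⟨hα0, hα1⟩ := hα
  constructor
  · -- limit at infinity
    have hu : Tendsto (fun t : ℝ => Real.exp (-β * t)) atTop (nhds 0) := by
      have h1 : Tendsto (fun t : ℝ => -β * t) atTop atBot := by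
        apply tendsto_id.const_mul_atTop_of_neg (by linarith)
      exact Real.tendsto_exp_atBot.comp h1
    have h1 : Tendsto (fun t => 1 - Real.exp (-β * t)) atTop (nhds 1) := by
      simpa using tendsto_const_nhds.sub hu
    have hden : Tendsto
        (fun t => Real.exp (-α * (1 - Real.exp (-β * t))) - Real.exp (-β * t))
        atTop (nhds (Real.exp (-α))) := by
      have h2 : Tendsto (fun t => -α * (1 - Real.exp (-β * t))) atTop (nhds (-α)) := by
        have := h1.const_mul (-α)
        rwa [mul_one] at this
      have h3 := (Real.continuous_exp.tendsto (-α)).comp h2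
      simpa using h3.sub hu
    have hfin : Tendsto D atTop
        (nhds (l₀ + μ * 1 + μ * 1 * 0 / Real.exp (-α))) := by
      exact (tendsto_const_nhds.add (tendsto_const_nhds.mul h1)).add
        (((tendsto_const_nhds.mul h1).mul hu).div hden (Real.exp_ne_zero _))
    simpa using hfin
  · -- limit at 0+
    set g : ℝ → ℝ := fun s => Real.exp (-α * s) - (1 - s) with hgdef
    have hg : HasDerivAt g (1 - α) 0 := by
      have h1 : HasDerivAt (fun s : ℝ => Real.exp (-α * s)) (-α) 0 := by
        have := ((hasDerivAt_id (0:ℝ)).const_mul (-α)).exp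
        simpa using this
      have h2 : HasDerivAt (fun s : ℝ => 1 - s) (-1) 0 := by
        simpa using (hasDerivAt_id (0:ℝ)).const_sub 1
      have := h1.sub h2
      exact this.congr_deriv (by ring)
    have hslope : Tendsto (fun s => g s / s) (nhdsWithin 0 (Set.Ioi 0)) (nhds (1 - α)) := by
      have h1 := hasDerivAt_iff_tendsto_slope.mp hg
      have h2 : Tendsto (slope g 0) (nhdsWithin 0 (Set.Ioi 0)) (nhds (1 - α)) :=
        h1.mono_left (nhdsWithin_mono _ (fun x hx => ne_of_gt hx))
      refine h2.congr fun s => ?_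
      simp [slope_fun_def, hgdef, Real.exp_zero]
      ring
    have hev : ∀ᶠ s in nhdsWithin 0 (Set.Ioi (0:ℝ)), 0 < g s / s :=
      hslope.eventually (lt_mem_nhds (by linarith))
    have hsf : ∀ᶠ s in nhdsWithin 0 (Set.Ioi (0:ℝ)), 0 < s := self_mem_nhdsWithin
    have hfrac : Tendsto (fun s => μ * s * (1 - s) / g s) (nhdsWithin 0 (Set.Ioi 0))
        (nhds (μ / (1 - α))) := by
      have hmain : Tendsto (fun s => μ * (1 - s) / (g s / s)) (nhdsWithin 0 (Set.Ioi 0))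
          (nhds (μ * (1 - 0) / (1 - α))) := by
        refine Tendsto.div ?_ hslope (by linarith)
        exact tendsto_const_nhds.mul
          (tendsto_const_nhds.sub (tendsto_id.mono_left nhdsWithin_le_nhds))
      have heq : ∀ᶠ s in nhdsWithin 0 (Set.Ioi (0:ℝ)),
          μ * (1 - s) / (g s / s) = μ * s * (1 - s) / g s := by
        filter_upwards [hev, hsf] with s h1 h2
        have hgs : g s ≠ 0 := by
          have : 0 < g s := by
            have := mul_pos h1 h2
            rwa [div_mul_cancel₀ _ (ne_of_gt h2)] at this
          exact ne_of_gt this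
        field_simp
      have := hmain.congr' heq
      simpa using this
    have hL : Tendsto (fun s => l₀ + μ * s + μ * s * (1 - s) / g s)
        (nhdsWithin 0 (Set.Ioi 0)) (nhds (l₀ + μ / (1 - α))) := by
      have h1 : Tendsto (fun s : ℝ => l₀ + μ * s) (nhdsWithin 0 (Set.Ioi 0))
          (nhds (l₀ + μ * 0)) :=
        tendsto_const_nhds.add
          (tendsto_const_nhds.mul (tendsto_id.mono_left nhdsWithin_le_nhds))
      have := h1.add hfrac
      simpa using this
    have hs : Tendsto (fun t : ℝ => 1 - Real.exp (-β * t)) (nhdsWithin 0 (Set.Ioi 0))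
        (nhdsWithin 0 (Set.Ioi 0)) := by
      rw [tendsto_nhdsWithin_iff]
      constructor
      · have hc : Tendsto (fun t : ℝ => 1 - Real.exp (-β * t)) (nhds 0) (nhds 0) := by
          have hc0 : Continuous (fun t : ℝ => 1 - Real.exp (-β * t)) := by continuity
          simpa using hc0.tendsto 0
        exact hc.mono_left nhdsWithin_le_nhds
      · filter_upwards [self_mem_nhdsWithin] with t ht
        have : Real.exp (-β * t) < 1 := by
          rw [Real.exp_lt_one_iff]
          have : (0:ℝ) < t := ht
          nlinarith
        simpa [Set.mem_Ioi] using this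
    have := hL.comp hs
    refine this.congr fun t => ?_
    simp only [Function.comp, hgdef, D]
    ring_nf
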